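/- For every θ ∈ (0,π) and every k > 0, the Hilbert–Schmidt norm of T̂_θ(k) satisfies ‖T̂_θ(k)‖_HS² = ∫_ℝ ∫_ℝ T̂_θ(p,q;k)² dp dq = 1/(2π sin(θ) k²). -/

import Mathlib

open MeasureTheory Real

noncomputable section

/-- The kernel of the integral operator `T̂_θ(k)` at energy `−k²`:
`T̂_θ(p,q;k) = (1/(2π sin θ)) · ((p² − 2 cos(θ)·p·q + q²)/(2 sin²(θ)) + k²)⁻¹`. -/
def TkerE (θ k p q : ℝ) : ℝ :=
  (1 / (2 * Real.pi * Real.sin θ)) *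
    ((p ^ 2 - 2 * Real.cos θ * p * q + q ^ 2) / (2 * Real.sin θ ^ 2) + k ^ 2)⁻¹

open Filter Set Topology

lemma even_int {f : ℝ → ℝ} (hsymm : ∀ x, f (-x) = f x)
    (hi : IntegrableOn f (Ioi 0)) : Integrable f := by
  have hIio : IntegrableOn f (Iio 0) := by
    rw [← (Measure.measurePreserving_neg (volume : Measure ℝ)).integrableOn_comp_preimage
        (Homeomorph.neg ℝ).measurableEmbedding]
    simp only [Function.comp_def, hsymm, neg_preimage, neg_Iio, neg_zero]
    exact hi
  rw [← integrableOn_univ, ← Set.Iio_union_Ici (a := (0:ℝ)), integrableOn_union,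
    integrableOn_Ici_iff_integrableOn_Ioi]
  exact ⟨hIio, hi⟩

lemma intA (a : ℝ) (ha : 0 < a) :
    Integrable (fun u : ℝ => ((u ^ 2 + a ^ 2) ^ 2)⁻¹) ∧
    ∫ u : ℝ, ((u ^ 2 + a ^ 2) ^ 2)⁻¹ = π / (2 * a ^ 3) := by
  have hne : ∀ u : ℝ, u ^ 2 + a ^ 2 ≠ 0 := fun u => by positivity
  set F : ℝ → ℝ := fun u => (u / (u ^ 2 + a ^ 2) + arctan (u / a) / a) / (2 * a ^ 2) with hF
  have hder : ∀ u : ℝ, HasDerivAt F (((u ^ 2 + a ^ 2) ^ 2)⁻¹) u := by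
    intro u
    have h1 : HasDerivAt (fun u : ℝ => u / (u ^ 2 + a ^ 2))
        ((1 * (u ^ 2 + a ^ 2) - u * (2 * u ^ 1)) / (u ^ 2 + a ^ 2) ^ 2) u := by
      exact (hasDerivAt_id u).div ((hasDerivAt_pow 2 u).add_const (a ^ 2)) (hne u)
    have h2 : HasDerivAt (fun u : ℝ => arctan (u / a)) (1 / (1 + (u / a) ^ 2) * (1 / a)) u := by
      simpa using ((hasDerivAt_id u).div_const a).arctan
    have := (h1.add (h2.div_const a)).div_const (2 * a ^ 2)
    convert this using 1 <;> try rfl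
    have h3 : 1 + (u / a) ^ 2 ≠ 0 := by positivity
    field_simp
    ring
  have hA : Tendsto (fun u : ℝ => u / (u ^ 2 + a ^ 2)) atTop (𝓝 0) := by
    have h1 : Tendsto (fun u : ℝ => (u ^ 2 + a ^ 2) / u) atTop atTop := by
      apply tendsto_atTop_mono' atTop ?_ tendsto_id
      filter_upwards [eventually_gt_atTop 0] with u hu
      rw [id_eq, le_div_iff₀ hu]
      nlinarith
    apply h1.inv_tendsto_atTop.congr'
    filter_upwards [eventually_gt_atTop 0] with u hu
    simp [Pi.inv_apply, inv_div]
  have harctop : Tendsto (fun u : ℝ => arctan (u / a)) atTop (𝓝 (π / 2)) :=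
    (tendsto_nhds_of_tendsto_nhdsWithin tendsto_arctan_atTop).comp
      (tendsto_id.atTop_div_const ha)
  have htop : Tendsto F atTop (𝓝 ((0 + (π / 2) / a) / (2 * a ^ 2))) :=
    (hA.add (harctop.div_const a)).div_const _
  have hAbot : Tendsto (fun u : ℝ => u / (u ^ 2 + a ^ 2)) atBot (𝓝 0) := by
    have h2 : Tendsto ((fun u : ℝ => u / (u ^ 2 + a ^ 2)) ∘ Neg.neg) atTop (𝓝 0) := by
      have h3 : ((fun u : ℝ => u / (u ^ 2 + a ^ 2)) ∘ Neg.neg)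
          = fun u : ℝ => -(u / (u ^ 2 + a ^ 2)) := by
        funext u; simp [Function.comp_def, neg_div]
      rw [h3, ← neg_zero]
      exact hA.neg
    have := h2.comp tendsto_neg_atBot_atTop
    simpa [Function.comp_def] using this
  have harcbot : Tendsto (fun u : ℝ => arctan (u / a)) atBot (𝓝 (-(π / 2))) := by
    refine (tendsto_nhds_of_tendsto_nhdsWithin tendsto_arctan_atBot).comp ?_
    exact Tendsto.atBot_div_const ha tendsto_id
  have hbot : Tendsto F atBot (𝓝 ((0 + (-(π / 2)) / a) / (2 * a ^ 2))) :=
    (hAbot.add (harcbot.div_const a)).div_const _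
  have hiOn : IntegrableOn (fun u : ℝ => ((u ^ 2 + a ^ 2) ^ 2)⁻¹) (Ioi 0) :=
    integrableOn_Ioi_deriv_of_nonneg' (fun x _ => hder x)
      (fun x _ => by positivity) htop
  have hint : Integrable (fun u : ℝ => ((u ^ 2 + a ^ 2) ^ 2)⁻¹) :=
    even_int (fun x => by rw [neg_pow]; ring_nf) hiOn
  refine ⟨hint, ?_⟩
  rw [integral_of_hasDerivAt_of_tendsto hder hint hbot htop]
  field_simp
  ring


lemma intB (b : ℝ) (hb : 0 < b) :
    Integrable (fun q : ℝ => ((q ^ 2 + b ^ 2) * Real.sqrt (q ^ 2 + b ^ 2))⁻¹) ∧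
    ∫ q : ℝ, ((q ^ 2 + b ^ 2) * Real.sqrt (q ^ 2 + b ^ 2))⁻¹ = 2 / b ^ 2 := by
  set G : ℝ → ℝ := fun q => q / (b ^ 2 * Real.sqrt (q ^ 2 + b ^ 2)) with hG
  have hpos : ∀ q : ℝ, (0:ℝ) < q ^ 2 + b ^ 2 := fun q => by positivity
  have hder : ∀ q : ℝ, HasDerivAt G (((q ^ 2 + b ^ 2) * Real.sqrt (q ^ 2 + b ^ 2))⁻¹) q := by
    intro q
    have hS2 : Real.sqrt (q ^ 2 + b ^ 2) ^ 2 = q ^ 2 + b ^ 2 := Real.sq_sqrt (hpos q).le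
    have hSpos : 0 < Real.sqrt (q ^ 2 + b ^ 2) := Real.sqrt_pos.mpr (hpos q)
    have hsqrt : HasDerivAt (fun q : ℝ => Real.sqrt (q ^ 2 + b ^ 2))
        ((2 * q ^ 1) / (2 * Real.sqrt (q ^ 2 + b ^ 2))) q :=
      ((hasDerivAt_pow 2 q).add_const (b ^ 2)).sqrt (hpos q).ne'
    have hden : HasDerivAt (fun q : ℝ => b ^ 2 * Real.sqrt (q ^ 2 + b ^ 2))
        (b ^ 2 * ((2 * q ^ 1) / (2 * Real.sqrt (q ^ 2 + b ^ 2)))) q := hsqrt.const_mul _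
    have := (hasDerivAt_id q).div hden (by positivity)
    convert this using 1 <;> try rfl
    field_simp
    simp only [id]
    linear_combination (-q ^ 2) * hS2
  have hdentop : Tendsto (fun q : ℝ => q ^ 2 + b ^ 2) atTop atTop := by
    apply tendsto_atTop_mono' atTop ?_ tendsto_id
    filter_upwards [eventually_ge_atTop 1] with q hq
    rw [id_eq]; nlinarith
  have h0 : Tendsto (fun q : ℝ => b ^ 2 / (q ^ 2 + b ^ 2)) atTop (𝓝 0) := by
    have := hdentop.inv_tendsto_atTop.const_mul (b ^ 2)
    simpa [div_eq_mul_inv] using this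
  have h1 : Tendsto (fun q : ℝ => q ^ 2 / (q ^ 2 + b ^ 2)) atTop (𝓝 1) := by
    have h2 : (fun q : ℝ => q ^ 2 / (q ^ 2 + b ^ 2))
        = fun q : ℝ => 1 - b ^ 2 / (q ^ 2 + b ^ 2) := by
      funext q; field_simp; ring
    rw [h2]
    simpa using (tendsto_const_nhds (x := (1:ℝ))).sub h0
  have h2 : Tendsto (fun q : ℝ => Real.sqrt (q ^ 2 / (q ^ 2 + b ^ 2))) atTop (𝓝 1) := by
    simpa [Real.sqrt_one] using h1.sqrt
  have htop : Tendsto G atTop (𝓝 (1 / b ^ 2)) := by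
    apply Tendsto.congr' _ (h2.div_const (b ^ 2))
    filter_upwards [eventually_gt_atTop 0] with q hq
    rw [Real.sqrt_div (sq_nonneg q), Real.sqrt_sq hq.le]
    rw [hG]; ring
  have hbot : Tendsto G atBot (𝓝 (-(1 / b ^ 2))) := by
    have h3 : (G ∘ Neg.neg) = fun q : ℝ => -(G q) := by
      funext q; simp only [Function.comp_def, hG, neg_sq, neg_div]
    have h4 : Tendsto (G ∘ Neg.neg) atTop (𝓝 (-(1 / b ^ 2))) := by
      rw [h3]; exact htop.neg
    have := h4.comp tendsto_neg_atBot_atTop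
    simpa [Function.comp_def] using this
  have hiOn : IntegrableOn (fun q : ℝ => ((q ^ 2 + b ^ 2) * Real.sqrt (q ^ 2 + b ^ 2))⁻¹)
      (Ioi 0) :=
    integrableOn_Ioi_deriv_of_nonneg' (fun x _ => hder x) (fun x _ => by positivity) htop
  have hint : Integrable (fun q : ℝ => ((q ^ 2 + b ^ 2) * Real.sqrt (q ^ 2 + b ^ 2))⁻¹) :=
    even_int (fun x => by rw [neg_sq]) hiOn
  refine ⟨hint, ?_⟩
  rw [integral_of_hasDerivAt_of_tendsto hder hint hbot htop]
  ring

/-- For every `θ ∈ (0,π)` and every `k > 0`, the Hilbert–Schmidt norm of `T̂_θ(k)` satisfies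
`‖T̂_θ(k)‖_HS² = ∫∫ T̂_θ(p,q;k)² dp dq = 1/(2π sin(θ) k²)`: the kernel is square integrable on
`ℝ²` and the integral of its square has that value. -/
theorem TkerE_HS_norm (θ : ℝ) (hθ : θ ∈ Set.Ioo 0 Real.pi) (k : ℝ) (hk : 0 < k) :
    Integrable (fun x : ℝ × ℝ => TkerE θ k x.1 x.2 ^ 2)
      (volume : Measure (ℝ × ℝ)) ∧
    ∫ x : ℝ × ℝ, TkerE θ k x.1 x.2 ^ 2 = 1 / (2 * Real.pi * Real.sin θ * k ^ 2) := by
  obtain ⟨hθ0, hθπ⟩ := hθ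
  have hs : 0 < Real.sin θ := Real.sin_pos_of_pos_of_lt_pi hθ0 hθπ
  have hπ : 0 < π := Real.pi_pos
  set s : ℝ := Real.sin θ with hsdef
  set c : ℝ := Real.cos θ with hcdef
  set b : ℝ := Real.sqrt 2 * k with hbdef
  have hb : 0 < b := by
    have : (0:ℝ) < Real.sqrt 2 := Real.sqrt_pos.mpr (by norm_num)
    exact mul_pos this hk
  have hb2 : b ^ 2 = 2 * k ^ 2 := by
    rw [hbdef, mul_pow, Real.sq_sqrt (by norm_num : (0:ℝ) ≤ 2)]
  set A : ℝ → ℝ := fun x => s * Real.sqrt (x ^ 2 + b ^ 2) with hAdef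
  have hA : ∀ x, 0 < A x := fun x => by
    have : (0:ℝ) < Real.sqrt (x ^ 2 + b ^ 2) := Real.sqrt_pos.mpr (by positivity)
    exact mul_pos hs this
  have hpyth : s ^ 2 + c ^ 2 = 1 := Real.sin_sq_add_cos_sq θ
  have hkey : ∀ p q : ℝ, (q - c * p) ^ 2 + A p ^ 2
      = 2 * s ^ 2 * ((p ^ 2 - 2 * c * p * q + q ^ 2) / (2 * s ^ 2) + k ^ 2) := by
    intro p q
    have h1 : Real.sqrt (p ^ 2 + b ^ 2) ^ 2 = p ^ 2 + b ^ 2 := Real.sq_sqrt (by positivity)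
    rw [hAdef]
    rw [mul_pow, h1, hb2]
    field_simp
    linear_combination p ^ 2 * hpyth
  have hD : ∀ p q : ℝ, (p ^ 2 - 2 * c * p * q + q ^ 2) / (2 * s ^ 2) + k ^ 2
      = ((q - c * p) ^ 2 + A p ^ 2) / (2 * s ^ 2) := by
    intro p q
    rw [hkey p q]
    field_simp
  have hDpos : ∀ p q : ℝ, 0 < (p ^ 2 - 2 * c * p * q + q ^ 2) / (2 * s ^ 2) + k ^ 2 := by
    intro p q
    rw [hD p q]
    have := hA p
    positivity
  have hTsq : ∀ p q : ℝ, TkerE θ k p q ^ 2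
      = (1 / (2 * π * s)) ^ 2 * (4 * s ^ 4) * (((q - c * p) ^ 2 + A p ^ 2) ^ 2)⁻¹ := by
    intro p q
    simp only [TkerE, ← hsdef, ← hcdef]
    rw [hD p q]
    have hY : (0:ℝ) < (q - c * p) ^ 2 + A p ^ 2 := by have := hA p; positivity
    field_simp
    ring
  set K : ℝ := (1 / (2 * π * s)) ^ 2 * (4 * s ^ 4) * (π / (2 * s ^ 3)) with hKdef
  have hA3 : ∀ p : ℝ, A p ^ 3 = s ^ 3 * ((p ^ 2 + b ^ 2) * Real.sqrt (p ^ 2 + b ^ 2)) := by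
    intro p
    have h1 : Real.sqrt (p ^ 2 + b ^ 2) ^ 2 = p ^ 2 + b ^ 2 := Real.sq_sqrt (by positivity)
    rw [hAdef]
    rw [mul_pow, show (Real.sqrt (p ^ 2 + b ^ 2)) ^ 3
      = Real.sqrt (p ^ 2 + b ^ 2) ^ 2 * Real.sqrt (p ^ 2 + b ^ 2) by ring, h1]
  have hInner : ∀ p : ℝ, Integrable (fun q => TkerE θ k p q ^ 2) ∧
      ∫ q : ℝ, TkerE θ k p q ^ 2 = K * ((p ^ 2 + b ^ 2) * Real.sqrt (p ^ 2 + b ^ 2))⁻¹ := by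
    intro p
    have hcomp : (fun q : ℝ => TkerE θ k p q ^ 2)
        = fun q : ℝ => (1 / (2 * π * s)) ^ 2 * (4 * s ^ 4)
            * ((fun u : ℝ => ((u ^ 2 + A p ^ 2) ^ 2)⁻¹) (q - c * p)) := by
      funext q; rw [hTsq p q]
    constructor
    · rw [hcomp]
      exact (((intA (A p) (hA p)).1.comp_sub_right (c * p)).const_mul _)
    · rw [hcomp]
      rw [integral_const_mul]
      rw [integral_sub_right_eq_self (μ := volume) (fun u : ℝ => ((u ^ 2 + A p ^ 2) ^ 2)⁻¹) (c * p)]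
      rw [(intA (A p) (hA p)).2, hKdef, hA3 p]
      have h1 : Real.sqrt (p ^ 2 + b ^ 2) ≠ 0 := (Real.sqrt_pos.mpr (by positivity)).ne'
      have h2 : (0:ℝ) < p ^ 2 + b ^ 2 := by positivity
      field_simp
  have hcont : Continuous (fun x : ℝ × ℝ => TkerE θ k x.1 x.2 ^ 2) := by
    apply Continuous.pow
    apply Continuous.mul continuous_const
    apply Continuous.inv₀
    · fun_prop
    · intro x
      exact (hDpos x.1 x.2).ne'
  have hnorm : ∀ p : ℝ, (∫ q : ℝ, ‖TkerE θ k p q ^ 2‖)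
      = K * ((p ^ 2 + b ^ 2) * Real.sqrt (p ^ 2 + b ^ 2))⁻¹ := by
    intro p
    simp_rw [Real.norm_eq_abs, abs_pow, sq_abs]
    exact (hInner p).2
  have hKint : Integrable (fun p : ℝ => K * ((p ^ 2 + b ^ 2) * Real.sqrt (p ^ 2 + b ^ 2))⁻¹) :=
    (intB b hb).1.const_mul K
  have hInt : Integrable (fun x : ℝ × ℝ => TkerE θ k x.1 x.2 ^ 2)
      ((volume : Measure ℝ).prod (volume : Measure ℝ)) := by
    refine (integrable_prod_iff ?_).2 ⟨Eventually.of_forall fun p => (hInner p).1, ?_⟩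
    · exact (hcont.aestronglyMeasurable)
    · exact hKint.congr (Eventually.of_forall fun p => (hnorm p).symm)
  constructor
  · rw [Measure.volume_eq_prod]; exact hInt
  · rw [Measure.volume_eq_prod, integral_prod _ hInt]
    have : (fun p : ℝ => ∫ q : ℝ, TkerE θ k p q ^ 2)
        = fun p : ℝ => K * ((p ^ 2 + b ^ 2) * Real.sqrt (p ^ 2 + b ^ 2))⁻¹ := by
      funext p; exact (hInner p).2
    rw [this, integral_const_mul, (intB b hb).2, hKdef, hb2]
    field_simp
    ring
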